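/- arXiv:2602.11467 — 3 statements merged into one kernel-verified Lean document; each statement's English description precedes it below -/
import Mathlib

section
/- Let μ : ℝ → (Fin n → ℝ) and S : ℝ → Matrix (Fin n) (Fin n) ℝ be functions that are differentiable at t₀, with S(t) symmetric and positive definite for every t. Fix d ∈ ℝⁿ and set r = d − μ(t₀), Σ = S(t₀), μ' = deriv μ t₀, Σ' = deriv S t₀. Then the function t ↦ log((2π)^{-n/2} (det S(t))^{-1/2} exp(−(1/2)(d − μ(t))ᵀ S(t)⁻¹ (d − μ(t)))) has derivative at t₀ equal to μ'ᵀ Σ⁻¹ r + (1/2) rᵀ Σ⁻¹ Σ' Σ⁻¹ r − (1/2) trace(Σ⁻¹ Σ'). -/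
open Real Matrix

attribute [local instance] Matrix.normedAddCommGroup Matrix.normedSpace

noncomputable def detCM (n : ℕ) :
    ContinuousMultilinearMap ℝ (fun _ : Fin n => (Fin n → ℝ)) ℝ :=
  MultilinearMap.mkContinuous
    (Matrix.detRowAlternating (R := ℝ) (n := Fin n)).toMultilinearMap
    (n.factorial) (fun m => by
      have h1 : (Matrix.detRowAlternating (R := ℝ) (n := Fin n)).toMultilinearMap m
          = Matrix.det (Matrix.of fun i j => m i j) := rfl
      rw [h1, Matrix.det_apply']
      refine (norm_sum_le _ _).trans ?_
      have key : ∀ σ : Equiv.Perm (Fin n),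
          ‖((Equiv.Perm.sign σ : ℤ) : ℝ) * ∏ i, (Matrix.of fun i j => m i j) (σ i) i‖
          ≤ ∏ i, ‖m i‖ := by
        intro σ
        rw [norm_mul]
        have hs : ‖((Equiv.Perm.sign σ : ℤ) : ℝ)‖ = 1 := by
          rcases Int.units_eq_one_or (Equiv.Perm.sign σ) with h | h <;> simp [h]
        rw [hs, one_mul]
        calc ‖∏ i, m (σ i) i‖ = ∏ i, ‖m (σ i) i‖ := norm_prod _ _
          _ ≤ ∏ i, ‖m (σ i)‖ :=
            Finset.prod_le_prod (fun i _ => norm_nonneg _)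
              (fun i _ => norm_le_pi_norm (m (σ i)) i)
          _ = ∏ i, ‖m i‖ := Equiv.prod_comp σ fun i => ‖m i‖
      refine (Finset.sum_le_sum fun σ _ => key σ).trans ?_
      rw [Finset.sum_const, Finset.card_univ, nsmul_eq_mul]
      simp [Fintype.card_perm])

lemma detCM_apply {n : ℕ} (M : Matrix (Fin n) (Fin n) ℝ) :
    detCM n (fun i => M i) = M.det := rfl

lemma hasDerivAt_det_aux {n : ℕ} {S : ℝ → Matrix (Fin n) (Fin n) ℝ}
    {S' : Matrix (Fin n) (Fin n) ℝ} {t₀ : ℝ} (hS : HasDerivAt S S' t₀) :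
    HasDerivAt (fun t => (S t).det) (∑ i, ((S t₀).updateRow i (S' i)).det) t₀ := by
  have h := ((detCM n).hasFDerivAt (x := fun i => S t₀ i)).comp_hasDerivAt t₀ hS
  erw [ContinuousMultilinearMap.linearDeriv_apply] at h
  exact h

lemma sum_det_updateRow_eq_trace {n : ℕ} (A B : Matrix (Fin n) (Fin n) ℝ) :
    ∑ i, (A.updateRow i (B i)).det = (adjugate A * B).trace := by
  have hrow : ∀ i, (A.updateRow i (B i)).det = ∑ j, B i j * adjugate A j i := by
    intro i
    rw [Matrix.det_eq_sum_mul_adjugate_row (A.updateRow i (B i)) i]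
    refine Finset.sum_congr rfl fun j _ => ?_
    have h1 : (A.updateRow i (B i)) i j = B i j := by rw [Matrix.updateRow_self]
    have h2 : adjugate (A.updateRow i (B i)) j i = adjugate A j i := by
      rw [Matrix.adjugate_apply, Matrix.adjugate_apply]
      congr 1
      ext p q
      by_cases hp : p = i <;> simp [Matrix.updateRow_apply, hp]
    rw [h1, h2]
  simp only [hrow, Matrix.trace, Matrix.diag, Matrix.mul_apply]
  rw [Finset.sum_comm]
  exact Finset.sum_congr rfl fun j _ => Finset.sum_congr rfl fun i _ => mul_comm _ _

lemma hasDerivAt_updateRow {n : ℕ} {S : ℝ → Matrix (Fin n) (Fin n) ℝ}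
    {S' : Matrix (Fin n) (Fin n) ℝ} {t₀ : ℝ} (hS : HasDerivAt S S' t₀)
    (j : Fin n) (c : Fin n → ℝ) :
    HasDerivAt (fun t => (S t).updateRow j c) (S'.updateRow j 0) t₀ := by
  refine hasDerivAt_pi.2 fun k => ?_
  by_cases hk : k = j
  · subst hk
    have h1 : (fun t => (S t).updateRow k c k) = fun _ => c := by
      funext t; rw [Matrix.updateRow_self]
    rw [h1, Matrix.updateRow_self]
    exact hasDerivAt_const _ _
  · have h1 : (fun t => (S t).updateRow j c k) = fun t => S t k := by
      funext t; rw [Matrix.updateRow_ne hk]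
    rw [h1, Matrix.updateRow_ne hk]
    exact hasDerivAt_pi.1 hS k

lemma differentiableAt_adjugate {n : ℕ} {S : ℝ → Matrix (Fin n) (Fin n) ℝ}
    {S' : Matrix (Fin n) (Fin n) ℝ} {t₀ : ℝ} (hS : HasDerivAt S S' t₀) (i j : Fin n) :
    DifferentiableAt ℝ (fun t => (S t).adjugate i j) t₀ := by
  have h1 : (fun t => (S t).adjugate i j)
      = fun t => ((S t).updateRow j (Pi.single i 1)).det := by
    funext t; rw [Matrix.adjugate_apply]
  rw [h1]
  exact (hasDerivAt_det_aux (hasDerivAt_updateRow hS j (Pi.single i 1))).differentiableAt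

/-- The score function of the heteroscedastic Gaussian family with respect to
the time parameter: the time derivative of the Gaussian log-density. -/
theorem gaussian_score_formula {n : ℕ} (hn : 0 < n)
    (μ : ℝ → (Fin n → ℝ)) (S : ℝ → Matrix (Fin n) (Fin n) ℝ) (t₀ : ℝ)
    (hμ : DifferentiableAt ℝ μ t₀) (hS : DifferentiableAt ℝ S t₀)
    (hsym : ∀ t, (S t).IsSymm) (hpd : ∀ t, (S t).PosDef)
    (d : Fin n → ℝ) :
    HasDerivAt
      (fun t => Real.log ((2 * Real.pi) ^ (-(n : ℝ) / 2) * (S t).det ^ (-(1 : ℝ) / 2) *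
        Real.exp (-(1/2 : ℝ) * ∑ i, ∑ j, (d i - μ t i) * (S t)⁻¹ i j * (d j - μ t j))))
      ((∑ i, ∑ j, deriv μ t₀ i * (S t₀)⁻¹ i j * (d j - μ t₀ j))
        + (1/2 : ℝ) * ∑ i, ∑ j,
            (d i - μ t₀ i) * ((S t₀)⁻¹ * deriv S t₀ * (S t₀)⁻¹) i j * (d j - μ t₀ j)
        - (1/2 : ℝ) * ((S t₀)⁻¹ * deriv S t₀).trace) t₀ := by
  classical
  have hS' : HasDerivAt S (deriv S t₀) t₀ := hS.hasDerivAt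
  have hμ' : HasDerivAt μ (deriv μ t₀) t₀ := hμ.hasDerivAt
  set Sd := deriv S t₀ with hSd
  set md := deriv μ t₀ with hmd
  have hμi : ∀ i, HasDerivAt (fun t => μ t i) (md i) t₀ := fun i => hasDerivAt_pi.1 hμ' i
  have hdetpos : ∀ t, 0 < (S t).det := fun t => (hpd t).det_pos
  have hdetunit : ∀ t, IsUnit (S t).det := fun t => (hdetpos t).ne'.isUnit
  -- derivative of determinant
  have hdet : HasDerivAt (fun t => (S t).det) ((adjugate (S t₀) * Sd).trace) t₀ := by
    have := hasDerivAt_det_aux hS'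
    rwa [sum_det_updateRow_eq_trace] at this
  -- differentiability of inverse entries
  have hinvent : ∀ i j, DifferentiableAt ℝ (fun t => (S t)⁻¹ i j) t₀ := by
    intro i j
    have h1 : (fun t => (S t)⁻¹ i j) = fun t => ((S t).det)⁻¹ * (S t).adjugate i j := by
      funext t
      rw [Matrix.inv_def, Ring.inverse_eq_inv', Matrix.smul_apply, smul_eq_mul]
    rw [h1]
    exact (hdet.differentiableAt.inv (hdetpos t₀).ne').mul (differentiableAt_adjugate hS' i j)
  set Dm : Matrix (Fin n) (Fin n) ℝ :=
    Matrix.of (fun i j => deriv (fun t => (S t)⁻¹ i j) t₀) with hDmdef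
  have hD : ∀ i j, HasDerivAt (fun t => (S t)⁻¹ i j) (Dm i j) t₀ := fun i j =>
    (hinvent i j).hasDerivAt
  have hSij : ∀ i j, HasDerivAt (fun t => S t i j) (Sd i j) t₀ := fun i j =>
    hasDerivAt_pi.1 (hasDerivAt_pi.1 hS' i) j
  -- the derivative of the inverse
  have hDm : Dm = -((S t₀)⁻¹ * Sd * (S t₀)⁻¹) := by
    have hid : Sd * (S t₀)⁻¹ + S t₀ * Dm = 0 := by
      ext i j
      have h1 : HasDerivAt (fun t => ∑ k, S t i k * (S t)⁻¹ k j)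
          (∑ k, (Sd i k * (S t₀)⁻¹ k j + S t₀ i k * Dm k j)) t₀ :=
        HasDerivAt.fun_sum fun k _ => (hSij i k).fun_mul (hD k j)
      have h2 : (fun t => ∑ k, S t i k * (S t)⁻¹ k j)
          = fun _ => (1 : Matrix (Fin n) (Fin n) ℝ) i j := by
        funext t
        rw [← Matrix.mul_apply, Matrix.mul_nonsing_inv _ (hdetunit t)]
      rw [h2] at h1
      have h3 := h1.unique (hasDerivAt_const _ _)
      simp only [Matrix.add_apply, Matrix.mul_apply, Matrix.zero_apply]
      rw [Finset.sum_add_distrib] at h3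
      exact h3
    have h4 : S t₀ * Dm = -(Sd * (S t₀)⁻¹) := by
      rw [← eq_neg_of_add_eq_zero_right hid]
    calc Dm = (S t₀)⁻¹ * (S t₀ * Dm) := by
          rw [← Matrix.mul_assoc, Matrix.nonsing_inv_mul _ (hdetunit t₀), Matrix.one_mul]
      _ = -((S t₀)⁻¹ * Sd * (S t₀)⁻¹) := by
          rw [h4, Matrix.mul_neg, Matrix.mul_assoc]
  -- symmetry of the inverse
  have hsymA : ((S t₀)⁻¹)ᵀ = (S t₀)⁻¹ := by
    rw [Matrix.transpose_nonsing_inv, (hsym t₀).eq]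
  have hAsym : ∀ p q, (S t₀)⁻¹ p q = (S t₀)⁻¹ q p := fun p q => by
    simpa [Matrix.transpose_apply] using (congrFun (congrFun hsymA q) p)
  -- derivative of the quadratic form
  have hQ : HasDerivAt
      (fun t => ∑ i, ∑ j, (d i - μ t i) * (S t)⁻¹ i j * (d j - μ t j))
      (∑ i, ∑ j, (((0 - md i) * (S t₀)⁻¹ i j + (d i - μ t₀ i) * Dm i j) * (d j - μ t₀ j)
        + (d i - μ t₀ i) * (S t₀)⁻¹ i j * (0 - md j))) t₀ :=
    HasDerivAt.fun_sum fun i _ => HasDerivAt.fun_sum fun j _ =>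
      ((((hasDerivAt_const t₀ (d i)).fun_sub (hμi i)).fun_mul (hD i j)).fun_mul
        ((hasDerivAt_const t₀ (d j)).fun_sub (hμi j)))
  -- derivative of log det
  have hlogdet : HasDerivAt (fun t => Real.log (S t).det)
      ((adjugate (S t₀) * Sd).trace / (S t₀).det) t₀ := hdet.log (hdetpos t₀).ne'
  -- full log-density function
  have hgd : HasDerivAt
      (fun t => Real.log ((2 * Real.pi) ^ (-(n : ℝ) / 2))
        + (-(1 : ℝ) / 2) * Real.log (S t).det
        + (-(1/2 : ℝ)) * ∑ i, ∑ j, (d i - μ t i) * (S t)⁻¹ i j * (d j - μ t j))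
      (0 + (-(1 : ℝ) / 2) * ((adjugate (S t₀) * Sd).trace / (S t₀).det)
        + (-(1/2 : ℝ)) * ∑ i, ∑ j,
          (((0 - md i) * (S t₀)⁻¹ i j + (d i - μ t₀ i) * Dm i j) * (d j - μ t₀ j)
            + (d i - μ t₀ i) * (S t₀)⁻¹ i j * (0 - md j))) t₀ :=
    ((hasDerivAt_const t₀ _).add (hlogdet.const_mul _)).add (hQ.const_mul _)
  -- equality of the functions
  have hfun : ∀ t,
      Real.log ((2 * Real.pi) ^ (-(n : ℝ) / 2) * (S t).det ^ (-(1 : ℝ) / 2) *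
        Real.exp (-(1/2 : ℝ) * ∑ i, ∑ j, (d i - μ t i) * (S t)⁻¹ i j * (d j - μ t j)))
      = Real.log ((2 * Real.pi) ^ (-(n : ℝ) / 2))
        + (-(1 : ℝ) / 2) * Real.log (S t).det
        + (-(1/2 : ℝ)) * ∑ i, ∑ j, (d i - μ t i) * (S t)⁻¹ i j * (d j - μ t j) := by
    intro t
    have hc : (2 * Real.pi) ^ (-(n : ℝ) / 2) ≠ 0 :=
      (Real.rpow_pos_of_pos Real.two_pi_pos _).ne'
    have hp : ((S t).det : ℝ) ^ (-(1 : ℝ) / 2) ≠ 0 :=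
      (Real.rpow_pos_of_pos (hdetpos t) _).ne'
    rw [Real.log_mul (mul_ne_zero hc hp) (Real.exp_ne_zero _), Real.log_mul hc hp,
      Real.log_exp, Real.log_rpow (hdetpos t)]
  -- transfer along the function equality
  refine (Filter.EventuallyEq.hasDerivAt_iff
    (Filter.Eventually.of_forall hfun)).2 ?_
  -- now identify the derivative values
  convert hgd using 1
  rotate_left 2
  -- value equality
  have htr : ((S t₀)⁻¹ * Sd).trace = ((S t₀).adjugate * Sd).trace / (S t₀).det := by
    rw [Matrix.inv_def, Ring.inverse_eq_inv', Matrix.smul_mul, Matrix.trace_smul,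
      smul_eq_mul, div_eq_inv_mul]
  have hT3 : (∑ i, ∑ j, (d i - μ t₀ i) * (S t₀)⁻¹ i j * md j)
      = ∑ i, ∑ j, md i * (S t₀)⁻¹ i j * (d j - μ t₀ j) := by
    rw [Finset.sum_comm]
    refine Finset.sum_congr rfl fun p _ => Finset.sum_congr rfl fun q _ => ?_
    rw [hAsym q p]; ring
  have hsplit : (∑ i, ∑ j,
      (((0 - md i) * (S t₀)⁻¹ i j + (d i - μ t₀ i) * Dm i j) * (d j - μ t₀ j)
        + (d i - μ t₀ i) * (S t₀)⁻¹ i j * (0 - md j)))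
      = -(∑ i, ∑ j, md i * (S t₀)⁻¹ i j * (d j - μ t₀ j))
        - (∑ i, ∑ j, (d i - μ t₀ i) * ((S t₀)⁻¹ * Sd * (S t₀)⁻¹) i j * (d j - μ t₀ j))
        - (∑ i, ∑ j, (d i - μ t₀ i) * (S t₀)⁻¹ i j * md j) := by
    have hpt : ∀ i j,
        (((0 - md i) * (S t₀)⁻¹ i j + (d i - μ t₀ i) * Dm i j) * (d j - μ t₀ j)
          + (d i - μ t₀ i) * (S t₀)⁻¹ i j * (0 - md j))
        = -(md i * (S t₀)⁻¹ i j * (d j - μ t₀ j))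
          + (-((d i - μ t₀ i) * ((S t₀)⁻¹ * Sd * (S t₀)⁻¹) i j * (d j - μ t₀ j)))
          + (-((d i - μ t₀ i) * (S t₀)⁻¹ i j * md j)) := by
      intro i j
      rw [hDm]
      simp only [Matrix.neg_apply]
      ring
    simp only [hpt, Finset.sum_add_distrib, Finset.sum_neg_distrib]
    ring
  rw [hsplit, hT3, htr]
  ring
  · rfl
  · rfl
end

section
/- Let n be a positive integer, Σ : Matrix (Fin n) (Fin n) ℝ a symmetric positive-definite matrix, and A : Matrix (Fin n) (Fin n) ℝ a symmetric matrix. Then E[(rᵀ A r)²] = ∫ (∑_{i,j} r i * A i j * r j)² * φ_Σ(r) dr = (trace(A * Σ))² + 2 * trace((A * Σ)^2). -/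
open Real Matrix MeasureTheory

/-- The centered multivariate Gaussian density `N(0, Σ)` on `ℝⁿ`. -/
noncomputable def gaussDensity {n : ℕ} (Sig : Matrix (Fin n) (Fin n) ℝ)
    (r : Fin n → ℝ) : ℝ :=
  (2 * Real.pi) ^ (-(n : ℝ) / 2) * Sig.det ^ (-(1 : ℝ) / 2) *
    Real.exp (-(1/2 : ℝ) * ∑ i, ∑ j, r i * Sig⁻¹ i j * r j)

set_option linter.unreachableTactic false
set_option linter.unusedTactic false
set_option linter.unusedVariables false


lemma integrable_pow_gauss (k : ℕ) :
    Integrable (fun x : ℝ => x ^ k * Real.exp (-(1/2 : ℝ) * x ^ 2)) := by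
  have hb : (0:ℝ) < 1/2 := by norm_num
  have hs : (-1:ℝ) < (k:ℝ) := by
    have : (0:ℝ) ≤ (k:ℝ) := Nat.cast_nonneg k
    linarith
  have h1 : Integrable (fun x : ℝ => x ^ (k:ℝ) * Real.exp (-(1/2:ℝ) * x ^ 2)) :=
    integrable_rpow_mul_exp_neg_mul_sq hb hs
  have h2 : Integrable (fun x : ℝ => (-x) ^ (k:ℝ) * Real.exp (-(1/2:ℝ) * x ^ 2)) := by
    have := h1.comp_neg
    simpa [neg_sq] using this
  refine (h1.norm.add h2.norm).mono' ?_ ?_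
  · exact ((continuous_pow k).mul (by continuity)).aestronglyMeasurable
  · filter_upwards with x
    simp only [Pi.add_apply, norm_norm]
    rcases le_or_gt 0 x with hx | hx
    · have he : x ^ k = x ^ (k:ℝ) := (Real.rpow_natCast x k).symm
      calc ‖x ^ k * Real.exp (-(1/2:ℝ) * x ^ 2)‖
          = ‖x ^ (k:ℝ) * Real.exp (-(1/2:ℝ) * x ^ 2)‖ := by rw [← he]
        _ ≤ _ := le_add_of_nonneg_right (norm_nonneg _)
    · have hx' : (0:ℝ) ≤ -x := by linarith
      have he : ‖x ^ k‖ = ‖(-x) ^ (k:ℝ)‖ := by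
        rw [show ((-x:ℝ) ^ (k:ℝ)) = (-x) ^ k from Real.rpow_natCast (-x) k]
        simp [norm_eq_abs, abs_pow, abs_neg]
      calc ‖x ^ k * Real.exp (-(1/2:ℝ) * x ^ 2)‖
          = ‖(-x) ^ (k:ℝ) * Real.exp (-(1/2:ℝ) * x ^ 2)‖ := by
            rw [norm_mul, norm_mul, he]
        _ ≤ _ := le_add_of_nonneg_left (norm_nonneg _)

lemma gauss_moment_rec (k : ℕ) :
    ∫ x : ℝ, x ^ (k+2) * Real.exp (-(1/2 : ℝ) * x ^ 2)
      = (k+1 : ℝ) * ∫ x : ℝ, x ^ k * Real.exp (-(1/2 : ℝ) * x ^ 2) := by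
  have hu : ∀ x : ℝ, HasDerivAt (fun x : ℝ => x ^ (k+1)) ((k+1 : ℝ) * x ^ k) x := by
    intro x
    simpa using (hasDerivAt_pow (k+1) x)
  have hv : ∀ x : ℝ, HasDerivAt (fun x : ℝ => -Real.exp (-(1/2:ℝ) * x ^ 2))
      (x * Real.exp (-(1/2:ℝ) * x ^ 2)) x := by
    intro x
    have h1 : HasDerivAt (fun x : ℝ => -(1/2:ℝ) * x ^ 2) (-(1/2:ℝ) * (2 * x)) x := by
      simpa using ((hasDerivAt_pow 2 x).const_mul (-(1/2:ℝ)))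
    have := (h1.exp).neg
    convert (show HasDerivAt (fun x : ℝ => -Real.exp (-(1/2:ℝ) * x ^ 2)) _ x from this) using 1
    ring
  have huv' : Integrable ((fun x : ℝ => x ^ (k+1)) * fun x => x * Real.exp (-(1/2:ℝ) * x ^ 2)) := by
    have := integrable_pow_gauss (k+2)
    refine this.congr ?_
    filter_upwards with x
    simp only [Pi.mul_apply]
    ring
  have hu'v : Integrable ((fun x : ℝ => (k+1:ℝ) * x ^ k) * fun x => -Real.exp (-(1/2:ℝ) * x ^ 2)) := by
    have := ((integrable_pow_gauss k).const_mul (k+1:ℝ)).neg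
    refine this.congr ?_
    filter_upwards with x
    simp only [Pi.mul_apply, Pi.neg_apply]
    ring
  have huv : Integrable ((fun x : ℝ => x ^ (k+1)) * fun x => -Real.exp (-(1/2:ℝ) * x ^ 2)) := by
    have := (integrable_pow_gauss (k+1)).neg
    refine this.congr ?_
    filter_upwards with x
    simp only [Pi.mul_apply, Pi.neg_apply]
    ring
  have := integral_mul_deriv_eq_deriv_mul_of_integrable (fun x _ => hu x) (fun x _ => hv x) huv' hu'v huv
  have h2 : ∫ x : ℝ, x ^ (k+1) * (x * Real.exp (-(1/2:ℝ) * x ^ 2))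
      = ∫ x : ℝ, x ^ (k+2) * Real.exp (-(1/2:ℝ) * x ^ 2) := by
    congr 1; funext x; ring
  rw [h2] at this
  have h4 : (fun x : ℝ => -((k+1:ℝ) * x ^ k * -Real.exp (-(1/2:ℝ) * x ^ 2)))
      = fun x : ℝ => (k+1:ℝ) * (x ^ k * Real.exp (-(1/2:ℝ) * x ^ 2)) := by
    funext x; ring
  rw [this, ← integral_neg, h4, integral_const_mul]


lemma gauss_int_zero : ∫ x : ℝ, Real.exp (-(1/2:ℝ) * x ^ 2) = Real.sqrt (2*π) := by
  have h := integral_gaussian (1/2 : ℝ)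
  rw [h]
  congr 1
  field_simp

lemma gauss_moment_four_val (k : ℕ) (hk : k = 0 ∨ k = 2 ∨ k = 4) :
    ∫ x : ℝ, x ^ k * Real.exp (-(1/2:ℝ) * x ^ 2)
      = (if k = 4 then 3 else 1) * Real.sqrt (2*π) := by
  have h0 : ∫ x : ℝ, x ^ (0:ℕ) * Real.exp (-(1/2:ℝ) * x ^ 2) = Real.sqrt (2*π) := by
    simpa using gauss_int_zero
  have h2 : ∫ x : ℝ, x ^ (2:ℕ) * Real.exp (-(1/2:ℝ) * x ^ 2) = Real.sqrt (2*π) := by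
    have := gauss_moment_rec 0
    simp only [Nat.cast_zero, zero_add, one_mul] at this
    rw [this, h0]
  have h4 : ∫ x : ℝ, x ^ (4:ℕ) * Real.exp (-(1/2:ℝ) * x ^ 2) = 3 * Real.sqrt (2*π) := by
    have := gauss_moment_rec 2
    rw [this, h2]
    norm_num
  rcases hk with rfl | rfl | rfl
  · simpa using h0
  · simpa using h2
  · simpa using h4

variable {n : ℕ}

/-- exponent pattern -/
def cpat (i j m : Fin n) : ℕ := (if m = i then 2 else 0) + (if m = j then 2 else 0)

lemma pair_prod_eq (i j : Fin n) (y : Fin n → ℝ) :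
    (y i)^2 * (y j)^2 * ∏ m, Real.exp (-(1/2:ℝ) * (y m) ^ 2)
      = ∏ m, (y m) ^ (cpat i j m) * Real.exp (-(1/2:ℝ) * (y m) ^ 2) := by
  have key : ∀ (a : Fin n), (∏ m, y m ^ (if m = a then 2 else 0)) = y a ^ 2 := by
    intro a
    rw [show (∏ m, y m ^ (if m = a then 2 else 0)) = ∏ m, if m = a then y m ^ 2 else 1 from
      Finset.prod_congr rfl (fun m _ => by split <;> simp)]
    rw [Finset.prod_ite_eq' Finset.univ a (fun m => y m ^ 2)]
    simp
  rw [Finset.prod_mul_distrib]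
  congr 1
  simp only [cpat, pow_add]
  rw [Finset.prod_mul_distrib, key i, key j]

lemma integrable_pair (i j : Fin n) :
    Integrable (fun y : Fin n → ℝ =>
      (y i)^2 * (y j)^2 * ∏ m, Real.exp (-(1/2:ℝ) * (y m) ^ 2)) := by
  have : Integrable (fun y : Fin n → ℝ =>
      ∏ m, (y m) ^ (cpat i j m) * Real.exp (-(1/2:ℝ) * (y m) ^ 2)) :=
    Integrable.fintype_prod (f := fun m t => t ^ (cpat i j m) * Real.exp (-(1/2:ℝ) * t ^ 2))
      (fun m => integrable_pow_gauss _)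
  exact this.congr (by filter_upwards with y; rw [pair_prod_eq])

lemma gauss_pair_moment (i j : Fin n) :
    ∫ y : Fin n → ℝ, (y i)^2 * (y j)^2 * ∏ m, Real.exp (-(1/2:ℝ) * (y m) ^ 2)
      = (if i = j then 3 else 1) * Real.sqrt (2*π) ^ n := by
  have h1 : ∫ y : Fin n → ℝ, (y i)^2 * (y j)^2 * ∏ m, Real.exp (-(1/2:ℝ) * (y m) ^ 2)
      = ∏ m, ∫ t : ℝ, t ^ (cpat i j m) * Real.exp (-(1/2:ℝ) * t ^ 2) := by
    rw [← MeasureTheory.integral_fintype_prod_volume_eq_prod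
      (f := fun m t => t ^ (cpat i j m) * Real.exp (-(1/2:ℝ) * t ^ 2))]
    congr 1; funext y; rw [pair_prod_eq]
  rw [h1]
  have h2 : ∀ m, ∫ t : ℝ, t ^ (cpat i j m) * Real.exp (-(1/2:ℝ) * t ^ 2)
      = (if m = i ∧ m = j then 3 else 1) * Real.sqrt (2*π) := by
    intro m
    have hc : cpat i j m = 0 ∨ cpat i j m = 2 ∨ cpat i j m = 4 := by
      unfold cpat; split <;> split <;> simp
    rw [gauss_moment_four_val _ hc]
    congr 1
    unfold cpat
    by_cases hij : i = j
    · subst hij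
      by_cases hmi : m = i <;> simp [hmi]
    · by_cases hmi : m = i <;> by_cases hmj : m = j <;>
        simp [hmi, hmj, hij] <;> exact absurd (hmi ▸ hmj) hij
  simp_rw [h2]
  rw [Finset.prod_mul_distrib, Finset.prod_const, Finset.card_univ, Fintype.card_fin]
  congr 1
  by_cases hij : i = j
  · subst hij
    simp only [and_self]
    rw [Finset.prod_ite_eq' Finset.univ i (fun _ => (3:ℝ))]
    simp
  · rw [if_neg hij]
    apply Finset.prod_eq_one
    intro m _
    rw [if_neg]
    rintro ⟨rfl, rfl⟩
    exact hij rfl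


variable {n : ℕ}

lemma gauss_diag_second_moment (lam : Fin n → ℝ) :
    ∫ y : Fin n → ℝ, (∑ i, lam i * (y i)^2)^2 * ∏ m, Real.exp (-(1/2:ℝ) * (y m) ^ 2)
      = ((∑ i, lam i)^2 + 2 * ∑ i, (lam i)^2) * Real.sqrt (2*π) ^ n := by
  have hexp : ∀ y : Fin n → ℝ,
      (∑ i, lam i * (y i)^2)^2 * ∏ m, Real.exp (-(1/2:ℝ) * (y m) ^ 2)
        = ∑ i, ∑ j, lam i * lam j *
            ((y i)^2 * (y j)^2 * ∏ m, Real.exp (-(1/2:ℝ) * (y m) ^ 2)) := by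
    intro y
    rw [pow_two, Finset.sum_mul_sum, Finset.sum_mul]
    apply Finset.sum_congr rfl
    intro i _
    rw [Finset.sum_mul]
    apply Finset.sum_congr rfl
    intro j _
    ring
  simp_rw [hexp]
  rw [integral_finset_sum _ (fun i _ => ?_)]
  swap
  · exact integrable_finset_sum _ (fun j _ => ((integrable_pair i j).const_mul _))
  have : ∀ i : Fin n, (∫ y : Fin n → ℝ, ∑ j, lam i * lam j *
      ((y i)^2 * (y j)^2 * ∏ m, Real.exp (-(1/2:ℝ) * (y m) ^ 2)))
      = ∑ j, lam i * lam j * ((if i = j then 3 else 1) * Real.sqrt (2*π) ^ n) := by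
    intro i
    rw [integral_finset_sum _ (fun j _ => ((integrable_pair i j).const_mul _))]
    apply Finset.sum_congr rfl
    intro j _
    rw [MeasureTheory.integral_const_mul, gauss_pair_moment]
  simp_rw [this]
  have key : ∑ i, ∑ j, lam i * lam j * ((if i = j then 3 else 1) * Real.sqrt (2*π) ^ n)
      = ((∑ i, lam i)^2 + 2 * ∑ i, (lam i)^2) * Real.sqrt (2*π) ^ n := by
    have h1 : ∀ i j : Fin n, lam i * lam j * ((if i = j then 3 else 1) * Real.sqrt (2*π) ^ n)
        = (lam i * lam j + if j = i then 2 * (lam i * lam j) else 0) * Real.sqrt (2*π) ^ n := by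
      intro i j
      by_cases h : i = j
      · subst h; simp; ring
      · rw [if_neg h, if_neg (fun hh => h hh.symm)]; ring
    simp_rw [h1, ← Finset.sum_mul]
    congr 1
    have h2 : ∀ i : Fin n, ∑ j, (lam i * lam j + if j = i then 2 * (lam i * lam j) else 0)
        = lam i * ∑ j, lam j + 2 * lam i ^ 2 := by
      intro i
      rw [Finset.sum_add_distrib,
        Finset.sum_ite_eq' Finset.univ i (fun j => 2 * (lam i * lam j))]
      simp [Finset.mul_sum]
      ring
    simp_rw [h2]
    rw [Finset.sum_add_distrib, ← Finset.sum_mul, ← Finset.mul_sum]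
    ring
  rw [key]


variable {n : ℕ}

lemma integral_comp_mulVec (M : Matrix (Fin n) (Fin n) ℝ) (hM : M.det ≠ 0)
    (g : (Fin n → ℝ) → ℝ) :
    ∫ r : Fin n → ℝ, g r = |M.det| * ∫ y : Fin n → ℝ, g (M.mulVec y) := by
  have hinv : Invertible M := M.invertibleOfIsUnitDet (isUnit_iff_ne_zero.2 hM)
  let e₀ : (Fin n → ℝ) ≃ₗ[ℝ] (Fin n → ℝ) := M.toLinearEquiv' hinv
  let e : (Fin n → ℝ) ≃ᵐ (Fin n → ℝ) :=
    e₀.toContinuousLinearEquiv.toHomeomorph.toMeasurableEquiv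
  have hdet : LinearMap.det (Matrix.toLin' M) ≠ 0 := by
    rwa [LinearMap.det_toLin']
  have hcoe : (e : (Fin n → ℝ) → (Fin n → ℝ)) = ⇑(Matrix.toLin' M) := rfl
  have hmap : (volume : Measure (Fin n → ℝ)).map e = ENNReal.ofReal |M.det|⁻¹ • volume := by
    rw [hcoe, Real.map_linearMap_volume_pi_eq_smul_volume_pi hdet, LinearMap.det_toLin',
      abs_inv]
  have h1 : ∫ y, g (e y) = ∫ r, g r ∂((volume : Measure (Fin n → ℝ)).map e) :=
    (MeasureTheory.integral_map_equiv e g).symm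
  rw [hmap, integral_smul_measure, ENNReal.toReal_ofReal (by positivity)] at h1
  have h2 : ∀ y, e y = M.mulVec y := fun y => by
    rw [hcoe]; exact Matrix.toLin'_apply M y
  simp_rw [h2] at h1
  rw [h1, smul_eq_mul, ← mul_assoc, mul_inv_cancel₀ (by simpa using hM), one_mul]

/-- Second moment of a Gaussian quadratic form:
`E[(rᵀ A r)²] = (tr(AΣ))² + 2 tr((AΣ)²)`. -/
theorem gaussian_quadratic_form_second_moment {n : ℕ} (hn : 0 < n)
    (Sig : Matrix (Fin n) (Fin n) ℝ) (hsym : Sig.IsSymm) (hpd : Sig.PosDef)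
    (A : Matrix (Fin n) (Fin n) ℝ) (hA : A.IsSymm) :
    ∫ r : Fin n → ℝ, (∑ i, ∑ j, r i * A i j * r j) ^ 2 * gaussDensity Sig r
      = (A * Sig).trace ^ 2 + 2 * ((A * Sig) ^ 2).trace := by
  classical
  have hSsd : Sig.PosSemidef := hpd.posSemidef
  obtain ⟨L, hLps, hLL⟩ : ∃ L : Matrix (Fin n) (Fin n) ℝ, L.PosSemidef ∧ L * L = Sig :=
    by open scoped MatrixOrder in exact
      ⟨CFC.sqrt Sig, (CFC.sqrt_nonneg Sig).posSemidef, CFC.sqrt_mul_sqrt_self Sig hSsd.nonneg⟩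
  have hLsym : Lᵀ = L := by
    have h := hLps.1
    rwa [Matrix.IsHermitian, Matrix.conjTranspose_eq_transpose_of_trivial] at h
  have hdetS : 0 < Sig.det := hpd.det_pos
  have hdetL2 : L.det * L.det = Sig.det := by rw [← Matrix.det_mul, hLL]
  have hdetLne : L.det ≠ 0 := by
    intro h; rw [h, mul_zero] at hdetL2; exact hdetS.ne hdetL2
  set B : Matrix (Fin n) (Fin n) ℝ := L * A * L with hBdef
  have hAt : Aᵀ = A := hA
  have hB : B.IsHermitian := by
    rw [Matrix.IsHermitian, Matrix.conjTranspose_eq_transpose_of_trivial]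
    simp [hBdef, Matrix.transpose_mul, hLsym, hAt, Matrix.mul_assoc]
  obtain ⟨V, lam, hVV', hVV, hdiag⟩ : ∃ (V : Matrix (Fin n) (Fin n) ℝ) (lam : Fin n → ℝ),
      V * star V = 1 ∧ star V * V = 1 ∧ star V * B * V = Matrix.diagonal lam := by
    refine ⟨(hB.eigenvectorUnitary : Matrix (Fin n) (Fin n) ℝ), hB.eigenvalues,
      (Matrix.mem_unitaryGroup_iff).mp (hB.eigenvectorUnitary).2,
      (Matrix.mem_unitaryGroup_iff').mp (hB.eigenvectorUnitary).2, ?_⟩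
    have h := hB.conjStarAlgAut_star_eigenvectorUnitary
    simpa [Function.comp] using h
  have hVt : star V = Vᵀ := by
    rw [Matrix.star_eq_conjTranspose, Matrix.conjTranspose_eq_transpose_of_trivial]
  set M : Matrix (Fin n) (Fin n) ℝ := L * V with hMdef
  have hdetV : V.det * V.det = 1 := by
    have h := congrArg Matrix.det hVV
    rwa [Matrix.det_mul, hVt, Matrix.det_transpose, Matrix.det_one] at h
  have hdetVne : V.det ≠ 0 := by
    intro h; rw [h, mul_zero] at hdetV; exact one_ne_zero hdetV.symm
  have hdetM : M.det = L.det * V.det := Matrix.det_mul _ _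
  have hdetMne : M.det ≠ 0 := by rw [hdetM]; exact mul_ne_zero hdetLne hdetVne
  have habsV : |V.det| = 1 := by
    rcases mul_self_eq_one_iff.mp hdetV with h | h <;> rw [h] <;> norm_num
  have habsM : |M.det| = Real.sqrt Sig.det := by
    rw [hdetM, abs_mul, habsV, mul_one, ← Real.sqrt_sq_eq_abs, sq, hdetL2]
  -- conjugation identities
  have hMA : Mᵀ * A * M = Matrix.diagonal lam := by
    rw [hMdef, Matrix.transpose_mul, hLsym, ← hVt, ← hdiag, hBdef]
    simp [Matrix.mul_assoc]
  have hMS : Mᵀ * Sig⁻¹ * M = 1 := by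
    have hLinv : L * Sig⁻¹ * L = 1 := by
      rw [← hLL, Matrix.mul_inv_rev]
      have h1 : L * (L⁻¹ * L⁻¹) * L = (L * L⁻¹) * (L⁻¹ * L) := by
        simp [Matrix.mul_assoc]
      rw [h1, Matrix.mul_nonsing_inv _ (isUnit_iff_ne_zero.2 hdetLne),
        Matrix.nonsing_inv_mul _ (isUnit_iff_ne_zero.2 hdetLne), mul_one]
    rw [hMdef, Matrix.transpose_mul, hLsym, ← hVt]
    calc star V * L * Sig⁻¹ * (L * V) = star V * ((L * Sig⁻¹ * L) * V) := by
          simp [Matrix.mul_assoc]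
      _ = star V * V := by rw [hLinv, one_mul]
      _ = 1 := hVV
  -- quadratic forms
  have hquad : ∀ (C : Matrix (Fin n) (Fin n) ℝ) (r : Fin n → ℝ),
      ∑ i, ∑ j, r i * C i j * r j = r ⬝ᵥ (C *ᵥ r) := by
    intro C r
    simp only [dotProduct, Matrix.mulVec, Finset.mul_sum]
    exact Finset.sum_congr rfl fun i _ => Finset.sum_congr rfl fun j _ => by ring
  have hconj : ∀ (C : Matrix (Fin n) (Fin n) ℝ) (y : Fin n → ℝ),
      (M *ᵥ y) ⬝ᵥ (C *ᵥ (M *ᵥ y)) = y ⬝ᵥ ((Mᵀ * C * M) *ᵥ y) := by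
    intro C y
    rw [Matrix.mulVec_mulVec, show M *ᵥ y = y ᵥ* Mᵀ from (Matrix.vecMul_transpose _ _).symm,
      Matrix.dotProduct_mulVec, Matrix.vecMul_vecMul, Matrix.dotProduct_mulVec,
      Matrix.mul_assoc]
  have hg1 : ∀ y : Fin n → ℝ,
      (∑ i, ∑ j, (M *ᵥ y) i * A i j * (M *ᵥ y) j) = ∑ i, lam i * (y i)^2 := by
    intro y
    rw [hquad, hconj, hMA]
    simp only [dotProduct, Matrix.mulVec_diagonal]
    exact Finset.sum_congr rfl fun i _ => by ring
  have hg2 : ∀ y : Fin n → ℝ,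
      (∑ i, ∑ j, (M *ᵥ y) i * Sig⁻¹ i j * (M *ᵥ y) j) = ∑ i, (y i)^2 := by
    intro y
    rw [hquad, hconj, hMS]
    simp only [Matrix.one_mulVec, dotProduct]
    exact Finset.sum_congr rfl fun i _ => by ring
  -- change of variables
  rw [integral_comp_mulVec M hdetMne]
  have hpt : ∀ y : Fin n → ℝ,
      (∑ i, ∑ j, (M *ᵥ y) i * A i j * (M *ᵥ y) j) ^ 2 * gaussDensity Sig (M *ᵥ y)
        = ((2 * Real.pi) ^ (-(n : ℝ) / 2) * Sig.det ^ (-(1 : ℝ) / 2)) *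
          ((∑ i, lam i * (y i)^2)^2 * ∏ m, Real.exp (-(1/2:ℝ) * (y m) ^ 2)) := by
    intro y
    rw [gaussDensity, hg1, hg2]
    rw [show (-(1/2:ℝ) * ∑ i, (y i)^2) = ∑ i, -(1/2:ℝ) * (y i)^2 from Finset.mul_sum _ _ _,
      Real.exp_sum]
    ring
  simp_rw [hpt]
  rw [MeasureTheory.integral_const_mul, gauss_diag_second_moment lam]
  -- scalar arithmetic
  have h2pi : (0:ℝ) < 2 * π := by positivity
  have hpow : Real.sqrt (2*π) ^ n = (2 * Real.pi) ^ ((n:ℝ)/2) := by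
    rw [Real.sqrt_eq_rpow, ← Real.rpow_natCast ((2*Real.pi) ^ ((1:ℝ)/2)) n,
      ← Real.rpow_mul h2pi.le]
    congr 1
    ring
  have hdetpow : Real.sqrt Sig.det = Sig.det ^ ((1:ℝ)/2) := by
    rw [Real.sqrt_eq_rpow]
  have hscal : |M.det| * ((2 * Real.pi) ^ (-(n : ℝ) / 2) * Sig.det ^ (-(1 : ℝ) / 2) *
      (((∑ i, lam i)^2 + 2 * ∑ i, (lam i)^2) * Real.sqrt (2*π) ^ n))
      = (∑ i, lam i)^2 + 2 * ∑ i, (lam i)^2 := by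
    rw [habsM, hdetpow, hpow]
    have e1 : Sig.det ^ ((1:ℝ)/2) * Sig.det ^ (-(1:ℝ)/2) = 1 := by
      rw [← Real.rpow_add hdetS]; norm_num
    have e2 : (2 * Real.pi) ^ (-(n : ℝ) / 2) * (2 * Real.pi) ^ ((n:ℝ)/2) = 1 := by
      rw [← Real.rpow_add h2pi, show (-(n:ℝ)/2 + (n:ℝ)/2) = 0 by ring, Real.rpow_zero]
    calc Sig.det ^ ((1:ℝ)/2) * ((2 * Real.pi) ^ (-(n : ℝ) / 2) * Sig.det ^ (-(1 : ℝ) / 2) *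
        (((∑ i, lam i)^2 + 2 * ∑ i, (lam i)^2) * (2 * Real.pi) ^ ((n:ℝ)/2)))
        = (Sig.det ^ ((1:ℝ)/2) * Sig.det ^ (-(1:ℝ)/2)) *
          ((2 * Real.pi) ^ (-(n : ℝ) / 2) * (2 * Real.pi) ^ ((n:ℝ)/2)) *
          ((∑ i, lam i)^2 + 2 * ∑ i, (lam i)^2) := by ring
      _ = _ := by rw [e1, e2]; ring
  rw [hscal]
  -- traces
  have htrB : (A * Sig).trace = ∑ i, lam i := by
    have h1 : (A * Sig).trace = B.trace :=
      calc (A * Sig).trace = ((A * L) * L).trace := by rw [← hLL, Matrix.mul_assoc]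
        _ = (L * (A * L)).trace := Matrix.trace_mul_comm _ _
        _ = B.trace := by rw [hBdef, Matrix.mul_assoc]
    have h2 : (Matrix.diagonal lam).trace = B.trace :=
      calc (Matrix.diagonal lam).trace = ((star V * B) * V).trace := by
            rw [← hdiag, Matrix.mul_assoc]
        _ = (V * (star V * B)).trace := Matrix.trace_mul_comm _ _
        _ = ((V * star V) * B).trace := by rw [Matrix.mul_assoc]
        _ = B.trace := by rw [hVV', one_mul]
    rw [h1, ← h2, Matrix.trace_diagonal]
  have htrB2 : ((A * Sig) ^ 2).trace = ∑ i, (lam i)^2 := by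
    have hBB : Matrix.diagonal lam * Matrix.diagonal lam = star V * (B * B) * V :=
      calc Matrix.diagonal lam * Matrix.diagonal lam
          = (star V * B * V) * (star V * B * V) := by rw [hdiag]
        _ = star V * (B * ((V * star V) * (B * V))) := by simp [Matrix.mul_assoc]
        _ = star V * (B * B) * V := by rw [hVV', one_mul]; simp [Matrix.mul_assoc]
    have hASAS : (A * Sig) * (A * Sig) = (A * L) * (B * L) := by
      rw [← hLL, hBdef]; simp [Matrix.mul_assoc]
    have h3 : ((A * Sig) ^ 2).trace = (B * B).trace :=
      calc ((A * Sig) ^ 2).trace = ((A * L) * (B * L)).trace := by rw [sq, hASAS]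
        _ = ((B * L) * (A * L)).trace := Matrix.trace_mul_comm _ _
        _ = (B * B).trace := by rw [hBdef]; simp [Matrix.mul_assoc]
    have h4 : (Matrix.diagonal lam * Matrix.diagonal lam).trace = (B * B).trace :=
      calc (Matrix.diagonal lam * Matrix.diagonal lam).trace
          = ((star V * (B * B)) * V).trace := by rw [hBB, Matrix.mul_assoc]
        _ = (V * (star V * (B * B))).trace := Matrix.trace_mul_comm _ _
        _ = ((V * star V) * (B * B)).trace := by rw [← Matrix.mul_assoc]
        _ = (B * B).trace := by rw [hVV', one_mul]
    rw [h3, ← h4, Matrix.diagonal_mul_diagonal, Matrix.trace_diagonal]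
    simp [sq]
  rw [htrB, htrB2]
end

section
/- Let n be a positive integer, Σ : Matrix (Fin n) (Fin n) ℝ a symmetric positive-definite matrix, v ∈ ℝⁿ, and M : Matrix (Fin n) (Fin n) ℝ a symmetric matrix. Define the score U(r) = vᵀ Σ⁻¹ r + (1/2) rᵀ Σ⁻¹ M Σ⁻¹ r − (1/2) trace(Σ⁻¹ * M). Then the Fisher Information E[U²] = ∫ U(r)² * φ_Σ(r) dr equals vᵀ Σ⁻¹ v + (1/2) * trace((Σ⁻¹ * M)^2). -/
open Real Matrix MeasureTheory

section OneD
open Filter Set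

lemma gauss_hasDeriv (x : ℝ) : HasDerivAt (fun t : ℝ => rexp (-(1/2) * t ^ 2)) (-x * rexp (-(1/2) * x ^ 2)) x := by
  have h1 : HasDerivAt (fun t : ℝ => -(1/2) * t ^ 2) (-x) x := by
    simpa using (hasDerivAt_pow 2 x).const_mul (-(1/2) : ℝ)
  simpa [mul_comm] using h1.exp

lemma integrable_monomial_gauss (k : ℕ) :
    Integrable (fun x : ℝ => x ^ k * rexp (-(1/2) * x ^ 2)) := by
  have := integrable_rpow_mul_exp_neg_mul_sq (b := 1/2) (by norm_num) (s := (k : ℝ))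
    (neg_one_lt_zero.trans_le (Nat.cast_nonneg k))
  simpa [Real.rpow_natCast] using this

lemma tendsto_monomial_gauss_cocompact (k : ℕ) :
    Tendsto (fun x : ℝ => x ^ k * rexp (-(1/2) * x ^ 2)) (cocompact ℝ) (nhds 0) := by
  have h := tendsto_rpow_abs_mul_exp_neg_mul_sq_cocompact (a := 1/2) (by norm_num) (k : ℝ)
  refine squeeze_zero_norm (fun x => le_of_eq ?_) h
  rw [norm_mul, Real.norm_eq_abs, Real.norm_eq_abs, abs_of_nonneg (exp_pos _).le, abs_pow,
    ← Real.rpow_natCast |x| k]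

lemma integral_eq_zero_of_antideriv {F f : ℝ → ℝ} (hF : ∀ x, HasDerivAt F (f x) x)
    (hf : Integrable f) (ht : Tendsto F atTop (nhds 0)) (hb : Tendsto F atBot (nhds 0)) :
    ∫ x, f x = 0 := by
  have h1 : ∫ x in Iic (0:ℝ), f x = F 0 - 0 :=
    integral_Iic_of_hasDerivAt_of_tendsto (hF 0).continuousAt.continuousWithinAt
      (fun x _ => hF x) hf.integrableOn hb
  have h2 : ∫ x in Ioi (0:ℝ), f x = 0 - F 0 :=
    integral_Ioi_of_hasDerivAt_of_tendsto (hF 0).continuousAt.continuousWithinAt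
      (fun x _ => hF x) hf.integrableOn ht
  rw [← intervalIntegral.integral_Iic_add_Ioi (b := (0:ℝ)) hf.integrableOn hf.integrableOn, h1, h2]
  ring

lemma tendsto_mg_atTop (k : ℕ) :
    Tendsto (fun x : ℝ => x ^ k * rexp (-(1/2) * x ^ 2)) atTop (nhds 0) :=
  (tendsto_monomial_gauss_cocompact k).mono_left
    (by rw [cocompact_eq_atBot_atTop]; exact le_sup_right)

lemma tendsto_mg_atBot (k : ℕ) :
    Tendsto (fun x : ℝ => x ^ k * rexp (-(1/2) * x ^ 2)) atBot (nhds 0) :=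
  (tendsto_monomial_gauss_cocompact k).mono_left
    (by rw [cocompact_eq_atBot_atTop]; exact le_sup_left)

lemma gauss_m0 : ∫ x : ℝ, rexp (-(1/2) * x ^ 2) = √(2*π) := by
  have := integral_gaussian (1/2)
  rw [show π / (1/2) = 2 * π by ring] at this
  simpa using this

lemma gauss_m1 : ∫ x : ℝ, x * rexp (-(1/2) * x ^ 2) = 0 := by
  refine integral_eq_zero_of_antideriv (F := fun x => -rexp (-(1/2) * x ^ 2))
    (fun x => (gauss_hasDeriv x).neg.congr_deriv (by ring)) ?_ ?_ ?_
  · simpa only [pow_one] using integrable_monomial_gauss 1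
  · simpa using (tendsto_mg_atTop 0).neg
  · simpa using (tendsto_mg_atBot 0).neg

lemma gauss_m2 : ∫ x : ℝ, x ^ 2 * rexp (-(1/2) * x ^ 2) = √(2*π) := by
  have h : ∫ x : ℝ, (x ^ 2 * rexp (-(1/2) * x ^ 2) - rexp (-(1/2) * x ^ 2)) = 0 := by
    refine integral_eq_zero_of_antideriv (F := fun x => -(x * rexp (-(1/2) * x ^ 2)))
      (fun x => ?_) ?_ ?_ ?_
    · have := ((hasDerivAt_id x).mul (gauss_hasDeriv x)).neg
      exact this.congr_deriv (by simp only [id_eq]; ring)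
    · exact (integrable_monomial_gauss 2).sub (by simpa only [pow_zero, one_mul] using integrable_monomial_gauss 0)
    · simpa using (tendsto_mg_atTop 1).neg
    · simpa using (tendsto_mg_atBot 1).neg
  have h2 := integral_sub (integrable_monomial_gauss 2) (by simpa only [pow_zero, one_mul] using integrable_monomial_gauss 0)
  rw [h] at h2
  have := sub_eq_zero.mp h2.symm
  rw [this, gauss_m0]

lemma gauss_m3 : ∫ x : ℝ, x ^ 3 * rexp (-(1/2) * x ^ 2) = 0 := by
  refine integral_eq_zero_of_antideriv
    (F := fun x => -((x ^ 2 + 2) * rexp (-(1/2) * x ^ 2))) (fun x => ?_) ?_ ?_ ?_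
  · have := (((hasDerivAt_pow 2 x).add_const 2).mul (gauss_hasDeriv x)).neg
    exact this.congr_deriv (by rw [show (2:ℕ) - 1 = 1 from rfl]; push_cast; ring)
  · simpa only [pow_succ, pow_zero, one_mul] using integrable_monomial_gauss 3
  · have h2 : Tendsto (fun x : ℝ => -(x ^ 2 * rexp (-(1/2) * x ^ 2)
        + 2 * (x ^ 0 * rexp (-(1/2) * x ^ 2)))) atTop (nhds 0) := by
      simpa using ((tendsto_mg_atTop 2).add ((tendsto_mg_atTop 0).const_mul 2)).neg
    exact h2.congr fun x => by ring
  · have h2 : Tendsto (fun x : ℝ => -(x ^ 2 * rexp (-(1/2) * x ^ 2)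
        + 2 * (x ^ 0 * rexp (-(1/2) * x ^ 2)))) atBot (nhds 0) := by
      simpa using ((tendsto_mg_atBot 2).add ((tendsto_mg_atBot 0).const_mul 2)).neg
    exact h2.congr fun x => by ring

lemma gauss_m4 : ∫ x : ℝ, x ^ 4 * rexp (-(1/2) * x ^ 2) = 3 * √(2*π) := by
  have h : ∫ x : ℝ, (x ^ 4 * rexp (-(1/2) * x ^ 2) - 3 * (x ^ 2 * rexp (-(1/2) * x ^ 2))) = 0 := by
    refine integral_eq_zero_of_antideriv (F := fun x => -(x ^ 3 * rexp (-(1/2) * x ^ 2)))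
      (fun x => ?_) ?_ ?_ ?_
    · have := ((hasDerivAt_pow 3 x).mul (gauss_hasDeriv x)).neg
      exact this.congr_deriv (by rw [show (3:ℕ) - 1 = 2 from rfl]; push_cast; ring)
    · exact (integrable_monomial_gauss 4).sub ((integrable_monomial_gauss 2).const_mul 3)
    · simpa using (tendsto_mg_atTop 3).neg
    · simpa using (tendsto_mg_atBot 3).neg
  have h2 := integral_sub (integrable_monomial_gauss 4) ((integrable_monomial_gauss 2).const_mul 3)
  rw [h] at h2
  have := sub_eq_zero.mp h2.symm
  rw [this, integral_const_mul, gauss_m2]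

lemma integrable_poly_gauss (a0 a1 a2 a3 a4 : ℝ) :
    Integrable (fun t : ℝ =>
      (a0 + a1 * t + a2 * t ^ 2 + a3 * t ^ 3 + a4 * t ^ 4) * rexp (-(1/2) * t ^ 2)) := by
  have h := (((((integrable_monomial_gauss 0).const_mul a0).add
    ((integrable_monomial_gauss 1).const_mul a1)).add
    ((integrable_monomial_gauss 2).const_mul a2)).add
    ((integrable_monomial_gauss 3).const_mul a3)).add
    ((integrable_monomial_gauss 4).const_mul a4)
  exact h.congr (Filter.Eventually.of_forall fun t => by simp only [Pi.add_apply]; ring)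

lemma integral_poly_gauss (a0 a1 a2 a3 a4 : ℝ) :
    ∫ t : ℝ, (a0 + a1 * t + a2 * t ^ 2 + a3 * t ^ 3 + a4 * t ^ 4) * rexp (-(1/2) * t ^ 2)
      = (a0 + a2 + 3 * a4) * √(2*π) := by
  have I0 := (integrable_monomial_gauss 0).const_mul a0
  have I1 := (integrable_monomial_gauss 1).const_mul a1
  have I2 := (integrable_monomial_gauss 2).const_mul a2
  have I3 := (integrable_monomial_gauss 3).const_mul a3
  have I4 := (integrable_monomial_gauss 4).const_mul a4
  have I01 : Integrable (fun t : ℝ => a0 * (t ^ 0 * rexp (-(1/2) * t ^ 2))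
      + a1 * (t ^ 1 * rexp (-(1/2) * t ^ 2))) := I0.add I1
  have I02 : Integrable (fun t : ℝ => a0 * (t ^ 0 * rexp (-(1/2) * t ^ 2))
      + a1 * (t ^ 1 * rexp (-(1/2) * t ^ 2)) + a2 * (t ^ 2 * rexp (-(1/2) * t ^ 2))) := I01.add I2
  have I03 : Integrable (fun t : ℝ => a0 * (t ^ 0 * rexp (-(1/2) * t ^ 2))
      + a1 * (t ^ 1 * rexp (-(1/2) * t ^ 2)) + a2 * (t ^ 2 * rexp (-(1/2) * t ^ 2))
      + a3 * (t ^ 3 * rexp (-(1/2) * t ^ 2))) := I02.add I3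
  have hfe : (fun t : ℝ =>
      (a0 + a1 * t + a2 * t ^ 2 + a3 * t ^ 3 + a4 * t ^ 4) * rexp (-(1/2) * t ^ 2))
      = fun t : ℝ => (a0 * (t ^ 0 * rexp (-(1/2) * t ^ 2)) + a1 * (t ^ 1 * rexp (-(1/2) * t ^ 2))
        + a2 * (t ^ 2 * rexp (-(1/2) * t ^ 2)) + a3 * (t ^ 3 * rexp (-(1/2) * t ^ 2)))
        + a4 * (t ^ 4 * rexp (-(1/2) * t ^ 2)) := funext fun t => by ring
  rw [hfe, integral_add I03 I4, integral_add I02 I3, integral_add I01 I2, integral_add I0 I1]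
  simp only [integral_const_mul, pow_zero, one_mul, pow_one]
  rw [gauss_m0, gauss_m1, gauss_m2, gauss_m3, gauss_m4]
  ring

noncomputable def stdG (t : ℝ) : ℝ := (2 * π) ^ (-(1:ℝ)/2) * rexp (-(1/2) * t ^ 2)

lemma kappa_mul_sqrt : (2 * π) ^ (-(1:ℝ)/2) * √(2*π) = 1 := by
  have h2π : (0:ℝ) < 2 * π := by positivity
  rw [Real.sqrt_eq_rpow, ← Real.rpow_add h2π]
  norm_num

lemma integrable_poly_stdG (a0 a1 a2 a3 a4 : ℝ) :
    Integrable (fun t : ℝ =>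
      (a0 + a1 * t + a2 * t ^ 2 + a3 * t ^ 3 + a4 * t ^ 4) * stdG t) := by
  refine ((integrable_poly_gauss a0 a1 a2 a3 a4).const_mul ((2 * π) ^ (-(1:ℝ)/2))).congr
    (Filter.Eventually.of_forall fun t => ?_)
  unfold stdG; ring

lemma integral_poly_stdG (a0 a1 a2 a3 a4 : ℝ) :
    ∫ t : ℝ, (a0 + a1 * t + a2 * t ^ 2 + a3 * t ^ 3 + a4 * t ^ 4) * stdG t
      = a0 + a2 + 3 * a4 := by
  have hfe : (fun t : ℝ =>
      (a0 + a1 * t + a2 * t ^ 2 + a3 * t ^ 3 + a4 * t ^ 4) * stdG t)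
      = fun t : ℝ => (2 * π) ^ (-(1:ℝ)/2) *
        ((a0 + a1 * t + a2 * t ^ 2 + a3 * t ^ 3 + a4 * t ^ 4) * rexp (-(1/2) * t ^ 2)) :=
    funext fun t => by unfold stdG; ring
  rw [hfe, integral_const_mul, integral_poly_gauss,
    show (2 * π) ^ (-(1:ℝ)/2) * ((a0 + a2 + 3 * a4) * √(2*π))
      = (a0 + a2 + 3 * a4) * ((2 * π) ^ (-(1:ℝ)/2) * √(2*π)) by ring, kappa_mul_sqrt, mul_one]

noncomputable def hfun (c d t : ℝ) : ℝ := c * t + (1/2) * d * (t ^ 2 - 1)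

noncomputable def kfun {n : ℕ} (c dvec : Fin n → ℝ) (i j m : Fin n) (t : ℝ) : ℝ :=
  (if m = i then hfun (c i) (dvec i) t else 1) *
  (if m = j then hfun (c j) (dvec j) t else 1) * stdG t

lemma integrable_stdG : Integrable stdG := by
  refine (integrable_poly_stdG 1 0 0 0 0).congr (Filter.Eventually.of_forall fun t => by ring)

lemma integral_stdG : ∫ t : ℝ, stdG t = 1 := by
  have hfe : (fun t : ℝ => stdG t)
      = fun t : ℝ => (1 + 0 * t + 0 * t ^ 2 + 0 * t ^ 3 + 0 * t ^ 4) * stdG t :=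
    funext fun t => by ring
  show ∫ t : ℝ, stdG t = 1
  rw [hfe, integral_poly_stdG]; norm_num

lemma integrable_h (a b : ℝ) : Integrable (fun t : ℝ => hfun a b t * stdG t) := by
  refine (integrable_poly_stdG (-(1/2)*b) a ((1/2)*b) 0 0).congr
    (Filter.Eventually.of_forall fun t => ?_)
  unfold hfun; ring

lemma integral_h (a b : ℝ) : ∫ t : ℝ, hfun a b t * stdG t = 0 := by
  have hfe : (fun t : ℝ => hfun a b t * stdG t)
      = fun t : ℝ => (-(1/2)*b + a * t + (1/2)*b * t ^ 2 + 0 * t ^ 3 + 0 * t ^ 4) * stdG t :=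
    funext fun t => by unfold hfun; ring
  rw [hfe, integral_poly_stdG]; ring

lemma integrable_hh (a b a' b' : ℝ) :
    Integrable (fun t : ℝ => hfun a b t * hfun a' b' t * stdG t) := by
  refine (integrable_poly_stdG ((1/2*b)*(1/2*b')) (-(a*(1/2*b') + a'*(1/2*b)))
    (a*a' - 2*((1/2*b)*(1/2*b'))) (a*(1/2*b') + a'*(1/2*b)) ((1/2*b)*(1/2*b'))).congr
    (Filter.Eventually.of_forall fun t => ?_)
  unfold hfun; ring

lemma integral_hh (a b a' b' : ℝ) :
    ∫ t : ℝ, hfun a b t * hfun a' b' t * stdG t = a*a' + (1/2)*(b*b') := by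
  have hfe : (fun t : ℝ => hfun a b t * hfun a' b' t * stdG t)
      = fun t : ℝ => ((1/2*b)*(1/2*b') + (-(a*(1/2*b') + a'*(1/2*b))) * t
        + (a*a' - 2*((1/2*b)*(1/2*b'))) * t ^ 2 + (a*(1/2*b') + a'*(1/2*b)) * t ^ 3
        + ((1/2*b)*(1/2*b')) * t ^ 4) * stdG t :=
    funext fun t => by unfold hfun; ring
  rw [hfe, integral_poly_stdG]; ring

lemma kfun_integrable {n : ℕ} (c dvec : Fin n → ℝ) (i j m : Fin n) :
    Integrable (kfun c dvec i j m) := by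
  unfold kfun
  by_cases hi : m = i <;> by_cases hj : m = j
  · simp only [if_pos hi, if_pos hj]; exact integrable_hh _ _ _ _
  · simp only [if_pos hi, if_neg hj, mul_one]; exact integrable_h _ _
  · simp only [if_neg hi, if_pos hj, one_mul]; exact integrable_h _ _
  · simp only [if_neg hi, if_neg hj, one_mul]; exact integrable_stdG

lemma kfun_integral_diag {n : ℕ} (c dvec : Fin n → ℝ) (i : Fin n) :
    ∫ t : ℝ, kfun c dvec i i i t = c i ^ 2 + (1/2) * dvec i ^ 2 := by
  unfold kfun
  simp only [eq_self_iff_true, if_true]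
  rw [integral_hh]; ring

lemma kfun_integral_off {n : ℕ} (c dvec : Fin n → ℝ) {i j : Fin n} (hij : i ≠ j) :
    ∫ t : ℝ, kfun c dvec i j i t = 0 := by
  unfold kfun
  simp only [eq_self_iff_true, if_true, if_neg hij, mul_one]
  exact integral_h _ _

lemma kfun_integral_other {n : ℕ} (c dvec : Fin n → ℝ) {i j m : Fin n} (hi : m ≠ i) (hj : m ≠ j) :
    ∫ t : ℝ, kfun c dvec i j m t = 1 := by
  unfold kfun
  simp only [if_neg hi, if_neg hj, one_mul]
  exact integral_stdG

lemma core {n : ℕ} (c dvec : Fin n → ℝ) :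
    ∫ x : Fin n → ℝ, (∑ i, hfun (c i) (dvec i) (x i)) ^ 2 * ∏ m, stdG (x m)
      = ∑ i, (c i ^ 2 + (1/2) * dvec i ^ 2) := by
  classical
  have hrw : (fun x : Fin n → ℝ => (∑ i, hfun (c i) (dvec i) (x i)) ^ 2 * ∏ m, stdG (x m))
      = fun x => ∑ i, ∑ j, ∏ m, kfun c dvec i j m (x m) := by
    funext x
    rw [sq, Finset.sum_mul_sum]
    simp only [Finset.sum_mul]
    refine Finset.sum_congr rfl fun i _ => Finset.sum_congr rfl fun j _ => ?_
    unfold kfun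
    rw [Finset.prod_mul_distrib, Finset.prod_mul_distrib, Finset.prod_ite_eq',
      Finset.prod_ite_eq']
    simp only [Finset.mem_univ, if_true]
  have Pint : ∀ i j : Fin n, Integrable (fun x : Fin n → ℝ => ∏ m, kfun c dvec i j m (x m)) :=
    fun i j => Integrable.fintype_prod (fun m => kfun_integrable c dvec i j m)
  rw [hrw, integral_finset_sum _ (fun i _ => integrable_finset_sum _ (fun j _ => Pint i j))]
  refine Finset.sum_congr rfl fun i _ => ?_
  rw [integral_finset_sum _ (fun j _ => Pint i j)]
  have heval : ∀ j, (∫ x : Fin n → ℝ, ∏ m, kfun c dvec i j m (x m))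
      = if i = j then c i ^ 2 + (1/2) * dvec i ^ 2 else 0 := by
    intro j
    rw [MeasureTheory.integral_fintype_prod_volume_eq_prod (fun m t => kfun c dvec i j m t)]
    by_cases hij : i = j
    · subst hij
      rw [if_pos rfl]
      have : (fun m => ∫ t : ℝ, kfun c dvec i i m t)
          = fun m => if m = i then c i ^ 2 + (1/2) * dvec i ^ 2 else 1 := by
        funext m
        by_cases hm : m = i
        · subst hm; rw [if_pos rfl, kfun_integral_diag]
        · rw [if_neg hm, kfun_integral_other c dvec hm hm]
      rw [this, Finset.prod_ite_eq']
      simp only [Finset.mem_univ, if_true]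
    · rw [if_neg hij]
      exact Finset.prod_eq_zero (Finset.mem_univ i) (kfun_integral_off c dvec hij)
  simp only [heval]
  rw [Finset.sum_ite_eq]
  simp only [Finset.mem_univ, if_true]

end OneD

lemma matrix_diag {n : ℕ} (Sig : Matrix (Fin n) (Fin n) ℝ) (hsym : Sig.IsSymm)
    (hpd : Sig.PosDef) (M : Matrix (Fin n) (Fin n) ℝ) (hM : M.IsSymm) :
    ∃ (A : Matrix (Fin n) (Fin n) ℝ) (dvec : Fin n → ℝ),
      A.det ≠ 0 ∧ A * Aᵀ = Sig ∧ Aᵀ * Sig⁻¹ * A = 1 ∧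
      Aᵀ * (Sig⁻¹ * M * Sig⁻¹) * A = diagonal dvec ∧
      (Sig⁻¹ * M).trace = ∑ i, dvec i ∧
      ((Sig⁻¹ * M) ^ 2).trace = ∑ i, dvec i ^ 2 := by
  classical
  have hdetSig : (0:ℝ) < Sig.det := hpd.det_pos
  have hSigUnit : IsUnit Sig.det := isUnit_iff_ne_zero.mpr hdetSig.ne'
  set U : Matrix (Fin n) (Fin n) ℝ := (hpd.1.eigenvectorUnitary : Matrix (Fin n) (Fin n) ℝ) with hUdef
  set P : Matrix (Fin n) (Fin n) ℝ :=
    U * diagonal (fun i => √(hpd.1.eigenvalues i)) * Uᵀ with hPdef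
  have hPP : P * P = Sig := by
    have hUt : Uᵀ * U = 1 := by
      have := Matrix.mem_unitaryGroup_iff'.mp hpd.1.eigenvectorUnitary.2
      rwa [Matrix.star_eq_conjTranspose, Matrix.conjTranspose_eq_transpose_of_trivial] at this
    have hspec := hpd.1.spectral_theorem
    rw [Unitary.conjStarAlgAut_apply, Matrix.star_eq_conjTranspose,
      Matrix.conjTranspose_eq_transpose_of_trivial, RCLike.ofReal_real_eq_id,
      Function.id_comp] at hspec
    conv_rhs => rw [hspec]
    rw [hPdef]
    simp only [Matrix.mul_assoc]
    rw [← Matrix.mul_assoc Uᵀ U, hUt, Matrix.one_mul, ← Matrix.mul_assoc (diagonal _),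
      diagonal_mul_diagonal]
    congr 3
    funext i
    exact Real.mul_self_sqrt (hpd.posSemidef.eigenvalues_nonneg i)
  have hPsymm : Pᵀ = P := by
    rw [hPdef, Matrix.transpose_mul, Matrix.transpose_mul, Matrix.transpose_transpose,
      diagonal_transpose, Matrix.mul_assoc]
  have hPdet : P.det ≠ 0 := by
    intro h
    rw [← hPP, Matrix.det_mul, h, mul_zero] at hdetSig
    exact lt_irrefl _ hdetSig
  have hPUnit : IsUnit P.det := isUnit_iff_ne_zero.mpr hPdet
  set N : Matrix (Fin n) (Fin n) ℝ := P⁻¹ * M * P⁻¹ with hNdef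
  have hNherm : N.IsHermitian := by
    rw [Matrix.IsHermitian, Matrix.conjTranspose_eq_transpose_of_trivial, hNdef,
      Matrix.transpose_mul, Matrix.transpose_mul, Matrix.transpose_nonsing_inv, hPsymm,
      hM.eq, mul_assoc]
  set Q : Matrix (Fin n) (Fin n) ℝ := (hNherm.eigenvectorUnitary : Matrix (Fin n) (Fin n) ℝ) with hQdef
  have hQmem : Q ∈ Matrix.unitaryGroup (Fin n) ℝ := hNherm.eigenvectorUnitary.2
  have hQQt : Q * Qᵀ = 1 := by
    have := (Matrix.mem_unitaryGroup_iff.mp hQmem)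
    rwa [Matrix.star_eq_conjTranspose, Matrix.conjTranspose_eq_transpose_of_trivial] at this
  have hQtQ : Qᵀ * Q = 1 := by
    have := (Matrix.mem_unitaryGroup_iff'.mp hQmem)
    rwa [Matrix.star_eq_conjTranspose, Matrix.conjTranspose_eq_transpose_of_trivial] at this
  set dvec : Fin n → ℝ := hNherm.eigenvalues with hdvec
  have hdiag : Qᵀ * N * Q = diagonal dvec := by
    have := hNherm.conjStarAlgAut_star_eigenvectorUnitary
    rw [Unitary.conjStarAlgAut_apply, Unitary.coe_star, star_star, Matrix.star_eq_conjTranspose,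
      Matrix.conjTranspose_eq_transpose_of_trivial, RCLike.ofReal_real_eq_id,
      Function.id_comp] at this
    convert this using 2
  have hSinv : Sig⁻¹ = P⁻¹ * P⁻¹ := by rw [← hPP, Matrix.mul_inv_rev]
  have hNQ : N = Q * diagonal dvec * Qᵀ := by
    calc N = (Q * Qᵀ) * N * (Q * Qᵀ) := by rw [hQQt, Matrix.one_mul, Matrix.mul_one]
    _ = Q * (Qᵀ * N * Q) * Qᵀ := by simp only [Matrix.mul_assoc]
    _ = Q * diagonal dvec * Qᵀ := by rw [hdiag]
  have hQdet : Q.det ≠ 0 := by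
    intro h
    have := congrArg Matrix.det hQQt
    rw [Matrix.det_mul, h, zero_mul, Matrix.det_one] at this
    norm_num at this
  have h5 : Sig⁻¹ * M = P⁻¹ * N * P := by
    rw [hSinv, hNdef]
    simp only [Matrix.mul_assoc]
    rw [Matrix.nonsing_inv_mul _ hPUnit, Matrix.mul_one]
  have htrN : (Sig⁻¹ * M).trace = ∑ i, dvec i := by
    rw [h5, Matrix.trace_mul_cycle, Matrix.mul_nonsing_inv _ hPUnit, Matrix.one_mul, hNQ,
      Matrix.trace_mul_cycle, hQtQ, Matrix.one_mul, Matrix.trace_diagonal]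
  have hNN : N * N = Q * (diagonal fun i => dvec i * dvec i) * Qᵀ := by
    rw [← Matrix.diagonal_mul_diagonal, hNQ]
    simp only [Matrix.mul_assoc]
    rw [← Matrix.mul_assoc Qᵀ Q, hQtQ, Matrix.one_mul]
  refine ⟨P * Q, dvec, ?_, ?_, ?_, ?_, htrN, ?_⟩
  · rw [Matrix.det_mul]
    exact mul_ne_zero hPdet hQdet
  · rw [Matrix.transpose_mul, hPsymm]
    calc P * Q * (Qᵀ * P) = P * (Q * Qᵀ) * P := by simp only [Matrix.mul_assoc]
    _ = Sig := by rw [hQQt, Matrix.mul_one, hPP]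
  · rw [Matrix.transpose_mul, hPsymm, hSinv]
    simp only [Matrix.mul_assoc]
    rw [Matrix.nonsing_inv_mul_cancel_left _ _ hPUnit, Matrix.mul_nonsing_inv_cancel_left _ _ hPUnit, hQtQ]
  · rw [Matrix.transpose_mul, hPsymm, hSinv, ← hdiag, hNdef]
    simp only [Matrix.mul_assoc]
    rw [Matrix.nonsing_inv_mul_cancel_left _ _ hPUnit, Matrix.mul_nonsing_inv_cancel_left _ _ hPUnit]
  · have h6 : (Sig⁻¹ * M) ^ 2 = P⁻¹ * (N * N) * P := by
      rw [pow_two, h5]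
      simp only [Matrix.mul_assoc]
      rw [Matrix.mul_nonsing_inv_cancel_left _ _ hPUnit]
    rw [h6, Matrix.trace_mul_cycle, Matrix.mul_nonsing_inv _ hPUnit, Matrix.one_mul, hNN,
      Matrix.trace_mul_cycle, hQtQ, Matrix.one_mul, Matrix.trace_diagonal]
    exact Finset.sum_congr rfl fun i _ => (sq (dvec i)).symm ▸ by ring

lemma quadform {n : ℕ} (B : Matrix (Fin n) (Fin n) ℝ) (x y : Fin n → ℝ) :
    ∑ i, ∑ j, x i * B i j * y j = x ⬝ᵥ (B *ᵥ y) := by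
  simp only [dotProduct, Matrix.mulVec, Finset.mul_sum, mul_assoc]

lemma conj_quad {n : ℕ} (A B : Matrix (Fin n) (Fin n) ℝ) (x : Fin n → ℝ) :
    (A *ᵥ x) ⬝ᵥ (B *ᵥ (A *ᵥ x)) = x ⬝ᵥ ((Aᵀ * B * A) *ᵥ x) := by
  calc (A *ᵥ x) ⬝ᵥ (B *ᵥ (A *ᵥ x))
      = (x ᵥ* Aᵀ) ⬝ᵥ (B *ᵥ (A *ᵥ x)) := by rw [Matrix.vecMul_transpose]
    _ = x ⬝ᵥ (Aᵀ *ᵥ (B *ᵥ (A *ᵥ x))) := (dotProduct_mulVec x Aᵀ _).symm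
    _ = x ⬝ᵥ ((Aᵀ * B * A) *ᵥ x) := by
        rw [Matrix.mulVec_mulVec, Matrix.mulVec_mulVec, Matrix.mul_assoc]

/-- Closed-form Fisher Information of the heteroscedastic Gaussian family:
for the score `U(r) = vᵀ Σ⁻¹ r + (1/2) rᵀ Σ⁻¹ M Σ⁻¹ r − (1/2) tr(Σ⁻¹ M)`,
`E[U²] = vᵀ Σ⁻¹ v + (1/2) tr((Σ⁻¹ M)²)`. -/
theorem gaussian_fisher_information {n : ℕ} (hn : 0 < n)
    (Sig : Matrix (Fin n) (Fin n) ℝ) (hsym : Sig.IsSymm) (hpd : Sig.PosDef)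
    (v : Fin n → ℝ) (M : Matrix (Fin n) (Fin n) ℝ) (hM : M.IsSymm) :
    ∫ r : Fin n → ℝ,
      ((∑ i, ∑ j, v i * Sig⁻¹ i j * r j)
        + (1/2 : ℝ) * ∑ i, ∑ j, r i * (Sig⁻¹ * M * Sig⁻¹) i j * r j
        - (1/2 : ℝ) * (Sig⁻¹ * M).trace) ^ 2 * gaussDensity Sig r
      = (∑ i, ∑ j, v i * Sig⁻¹ i j * v j)
        + (1/2 : ℝ) * ((Sig⁻¹ * M) ^ 2).trace := by
  classical
  obtain ⟨A, dvec, hdet, hAAt, hone, hdiagA, htr1, htr2⟩ := matrix_diag Sig hsym hpd M hM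
  have hdetSig : (0:ℝ) < Sig.det := hpd.det_pos
  have hSigUnit : IsUnit Sig.det := isUnit_iff_ne_zero.mpr hdetSig.ne'
  have hSsymm : Sig⁻¹ᵀ = Sig⁻¹ := by rw [Matrix.transpose_nonsing_inv, hsym.eq]
  set c : Fin n → ℝ := Aᵀ *ᵥ (Sig⁻¹ *ᵥ v) with hc
  set g : (Fin n → ℝ) → ℝ := fun r =>
      ((∑ i, ∑ j, v i * Sig⁻¹ i j * r j)
        + (1/2 : ℝ) * ∑ i, ∑ j, r i * (Sig⁻¹ * M * Sig⁻¹) i j * r j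
        - (1/2 : ℝ) * (Sig⁻¹ * M).trace) ^ 2 * gaussDensity Sig r with hgdef
  have hgcont : Continuous g := by rw [hgdef]; unfold gaussDensity; fun_prop
  -- pointwise identity after the change of variables
  have hpt : ∀ x : Fin n → ℝ, g (A *ᵥ x)
      = Sig.det ^ (-(1:ℝ)/2) *
        ((∑ i, hfun (c i) (dvec i) (x i)) ^ 2 * ∏ m, stdG (x m)) := by
    intro x
    have e1 : ∑ i, ∑ j, v i * Sig⁻¹ i j * (A *ᵥ x) j = ∑ i, c i * x i := by
      rw [quadform, Matrix.mulVec_mulVec, Matrix.dotProduct_mulVec]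
      have hvc : v ᵥ* (Sig⁻¹ * A) = c := by
        rw [hc, Matrix.mulVec_transpose,
          show Sig⁻¹ *ᵥ v = v ᵥ* Sig⁻¹ from by
            conv_lhs => rw [← hSsymm, Matrix.mulVec_transpose],
          Matrix.vecMul_vecMul]
      rw [hvc]
      rfl
    have e2 : ∑ i, ∑ j, (A *ᵥ x) i * (Sig⁻¹ * M * Sig⁻¹) i j * (A *ᵥ x) j
        = ∑ i, dvec i * x i ^ 2 := by
      rw [quadform, conj_quad, hdiagA]
      simp only [dotProduct, Matrix.mulVec_diagonal]
      exact Finset.sum_congr rfl fun i _ => by ring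
    have e3 : ∑ i, ∑ j, (A *ᵥ x) i * Sig⁻¹ i j * (A *ᵥ x) j = ∑ i, x i ^ 2 := by
      rw [quadform, conj_quad, hone, Matrix.one_mulVec]
      simp only [dotProduct]
      exact Finset.sum_congr rfl fun i _ => (sq (x i)).symm
    have e4 : gaussDensity Sig (A *ᵥ x) = Sig.det ^ (-(1:ℝ)/2) * ∏ m, stdG (x m) := by
      unfold gaussDensity stdG
      rw [e3, Finset.prod_mul_distrib, Finset.prod_const, ← Real.exp_sum]
      have hcard : (Finset.univ : Finset (Fin n)).card = n := by simp
      have hpow : ((2*π) ^ (-(1:ℝ)/2)) ^ (Finset.univ : Finset (Fin n)).card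
          = (2*π) ^ (-(n:ℝ)/2) := by
        rw [hcard, ← Real.rpow_natCast ((2*π) ^ (-(1:ℝ)/2)) n,
          ← Real.rpow_mul (by positivity : (0:ℝ) ≤ 2*π)]
        congr 1
        ring
      rw [hpow, show ∑ m, -(1/2 : ℝ) * x m ^ 2 = -(1/2 : ℝ) * ∑ m, x m ^ 2 from
        (Finset.mul_sum _ _ _).symm]
      ring
    have e5 : (∑ i, c i * x i) + (1/2 : ℝ) * ∑ i, dvec i * x i ^ 2
        - (1/2 : ℝ) * (Sig⁻¹ * M).trace = ∑ i, hfun (c i) (dvec i) (x i) := by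
      rw [htr1, Finset.mul_sum, Finset.mul_sum, ← Finset.sum_add_distrib,
        ← Finset.sum_sub_distrib]
      exact Finset.sum_congr rfl fun i _ => by unfold hfun; ring
    rw [hgdef]
    simp only
    rw [e1, e2, e4, e5]
    ring
  -- change of variables
  have hmeas : AEMeasurable (Matrix.toLin' A) (volume : Measure (Fin n → ℝ)) :=
    ((Matrix.toLin' A).continuous_of_finiteDimensional).measurable.aemeasurable
  have hmap := Real.map_matrix_volume_pi_eq_smul_volume_pi (M := A) hdet
  have habs : |A.det| ≠ 0 := abs_ne_zero.mpr hdet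
  have h1 : ∫ x, g ((Matrix.toLin' A) x) = |A.det|⁻¹ * ∫ r, g r := by
    rw [← integral_map hmeas hgcont.aestronglyMeasurable, hmap, integral_smul_measure,
      ENNReal.toReal_ofReal (abs_nonneg _), smul_eq_mul, abs_inv]
  have h2 : ∫ r, g r = |A.det| * ∫ x, g ((Matrix.toLin' A) x) := by
    rw [h1]
    field_simp
  -- evaluate the transformed integral
  have h3 : (fun x : Fin n → ℝ => g ((Matrix.toLin' A) x))
      = fun x => Sig.det ^ (-(1:ℝ)/2) *
        ((∑ i, hfun (c i) (dvec i) (x i)) ^ 2 * ∏ m, stdG (x m)) := by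
    funext x
    rw [Matrix.toLin'_apply]
    exact hpt x
  rw [hgdef] at h2
  rw [h2, h3, integral_const_mul, core]
  have hS2 : Sig.det = |A.det| ^ 2 := by
    rw [← hAAt, Matrix.det_mul, Matrix.det_transpose, sq, abs_mul_abs_self]
  have hconst : |A.det| * Sig.det ^ (-(1:ℝ)/2) = 1 := by
    rw [hS2, ← Real.rpow_natCast |A.det| 2, ← Real.rpow_mul (abs_nonneg _)]
    rw [show ((2:ℕ):ℝ) * (-(1:ℝ)/2) = -1 by norm_num, Real.rpow_neg_one]
    exact mul_inv_cancel₀ habs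
  rw [← mul_assoc, hconst, one_mul]
  -- final algebraic identification
  have hcc : ∑ i, c i ^ 2 = ∑ i, ∑ j, v i * Sig⁻¹ i j * v j := by
    have hdot : c ⬝ᵥ c = v ⬝ᵥ (Sig⁻¹ *ᵥ v) := by
      rw [hc]
      rw [show (Aᵀ *ᵥ (Sig⁻¹ *ᵥ v)) ⬝ᵥ (Aᵀ *ᵥ (Sig⁻¹ *ᵥ v))
          = ((Sig⁻¹ *ᵥ v) ᵥ* A) ⬝ᵥ (Aᵀ *ᵥ (Sig⁻¹ *ᵥ v)) from by rw [Matrix.mulVec_transpose],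
        ← Matrix.dotProduct_mulVec, Matrix.mulVec_mulVec, hAAt,
        Matrix.mulVec_mulVec, Matrix.mul_nonsing_inv _ hSigUnit, Matrix.one_mulVec]
      exact dotProduct_comm _ _
    rw [quadform, ← hdot]
    simp only [dotProduct]
    exact Finset.sum_congr rfl fun i _ => sq (c i)
  rw [Finset.sum_add_distrib, hcc, ← Finset.mul_sum, htr2]
end
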